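/- Let n > -1 and ν > -(n+1)/2, and let x > 0. Then ∫₀ˣ t^{-ν} L_{ν+n}(t) dt < (2(ν+n+1)/(n+1)) x^{-ν} L_{ν+n+1}(x) − ((2ν+n+1)/(n+1)) x^{-ν} L_{ν+n+3}(x) + b_{ν,n} x^{n+4} − c_{ν,n} x^{n+2}. -/

import Mathlib

open Real MeasureTheory Filter

/-- The modified Struve function of the first kind. -/
noncomputable def modStruveL (ν x : ℝ) : ℝ :=
  ∑' k : ℕ, (x / 2) ^ (ν + 2 * (k : ℝ) + 1) /
    (Real.Gamma ((k : ℝ) + 3 / 2) * Real.Gamma ((k : ℝ) + ν + 3 / 2))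

/-- The constant `b_{ν,n}`. -/
noncomputable def bConst (ν n : ℝ) : ℝ :=
  ((2 * ν + n + 1) * (2 * ν + n + 3)) /
    (Real.sqrt Real.pi * (2 : ℝ) ^ (ν + n + 4) * (n + 1) * (n + 4) * (ν + n + 3) *
      Real.Gamma (ν + n + 9 / 2))

/-- The constant `c_{ν,n}`. -/
noncomputable def cConst (ν n : ℝ) : ℝ :=
  (2 * ν + n + 1) /
    (Real.sqrt Real.pi * (2 : ℝ) ^ (ν + n + 1) * (n + 1) * (n + 2) *
      Real.Gamma (ν + n + 5 / 2))

lemma gamma_summable {c d : ℝ} (hc : 0 < c) (hd : 0 < d) {y : ℝ} (hy : 0 ≤ y) :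
    Summable (fun j : ℕ => y ^ j / (Real.Gamma ((j : ℝ) + c) * Real.Gamma ((j : ℝ) + d))) := by
  obtain ⟨N, hN⟩ := exists_nat_ge (2 * y)
  apply summable_of_ratio_norm_eventually_le (r := 1/2) (by norm_num)
  filter_upwards [eventually_ge_atTop (N + 1)] with j hj
  have hj1 : (1 : ℝ) ≤ (j : ℝ) := by
    have : 1 ≤ j := le_trans (Nat.le_add_left 1 N) hj
    exact_mod_cast this
  have h2y : 2 * y ≤ (j : ℝ) := le_trans hN (by exact_mod_cast le_trans (Nat.le_add_right N 1) hj)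
  have hjc : (0 : ℝ) < (j : ℝ) + c := by linarith
  have hjd : (0 : ℝ) < (j : ℝ) + d := by linarith
  have hg1 : 0 < Real.Gamma ((j : ℝ) + c) := Real.Gamma_pos_of_pos hjc
  have hg2 : 0 < Real.Gamma ((j : ℝ) + d) := Real.Gamma_pos_of_pos hjd
  have e1 : Real.Gamma (((j : ℕ) + 1 : ℕ) + c) = ((j : ℝ) + c) * Real.Gamma ((j : ℝ) + c) := by
    push_cast
    rw [show (j : ℝ) + 1 + c = ((j : ℝ) + c) + 1 by ring, Real.Gamma_add_one hjc.ne']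
  have e2 : Real.Gamma (((j : ℕ) + 1 : ℕ) + d) = ((j : ℝ) + d) * Real.Gamma ((j : ℝ) + d) := by
    push_cast
    rw [show (j : ℝ) + 1 + d = ((j : ℝ) + d) + 1 by ring, Real.Gamma_add_one hjd.ne']
  have hterm : y ^ (j + 1) / (Real.Gamma (((j : ℕ) + 1 : ℕ) + c) * Real.Gamma (((j : ℕ) + 1 : ℕ) + d))
      = (y ^ j / (Real.Gamma ((j : ℝ) + c) * Real.Gamma ((j : ℝ) + d))) *
        (y / (((j : ℝ) + c) * ((j : ℝ) + d))) := by
    rw [e1, e2, pow_succ, div_mul_div_comm]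
    ring_nf
  rw [hterm, Real.norm_eq_abs, Real.norm_eq_abs]
  have h0 : (0 : ℝ) ≤ y ^ j / (Real.Gamma ((j : ℝ) + c) * Real.Gamma ((j : ℝ) + d)) := by positivity
  rw [abs_of_nonneg (by positivity), abs_of_nonneg h0, mul_comm ((1:ℝ)/2)]
  apply mul_le_mul_of_nonneg_left _ h0
  rw [div_le_iff₀ (by positivity)]
  nlinarith [mul_pos hjc hjd, sq_nonneg ((j:ℝ) - 1)]

lemma summable_term (c d u v : ℝ) (hc : 0 < c) (hd : 0 < d) {x : ℝ} (hx : 0 < x) :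
    Summable (fun k : ℕ => x ^ (u + 2 * (k : ℝ)) /
      (2 ^ (v + 2 * (k : ℝ)) * (Real.Gamma ((k : ℝ) + c) * Real.Gamma ((k : ℝ) + d)))) := by
  have h := (gamma_summable hc hd (y := x ^ 2 / 4) (by positivity)).mul_left (x ^ u / 2 ^ v)
  refine h.congr fun k => ?_
  have hg1 : 0 < Real.Gamma ((k : ℝ) + c) := Real.Gamma_pos_of_pos (by positivity)
  have hg2 : 0 < Real.Gamma ((k : ℝ) + d) := Real.Gamma_pos_of_pos (by positivity)
  have hx1 : x ^ (u + 2 * (k : ℝ)) = x ^ u * (x ^ 2) ^ k := by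
    rw [Real.rpow_add hx, show (2 * (k : ℝ)) = ((2 * k : ℕ) : ℝ) by push_cast; ring,
      Real.rpow_natCast, pow_mul]
  have hx2 : (2 : ℝ) ^ (v + 2 * (k : ℝ)) = 2 ^ v * (4 : ℝ) ^ k := by
    rw [Real.rpow_add (by norm_num : (0:ℝ) < 2),
      show (2 * (k : ℝ)) = ((2 * k : ℕ) : ℝ) by push_cast; ring,
      Real.rpow_natCast, pow_mul]
    norm_num
  rw [hx1, hx2, div_pow]
  have h4 : (0:ℝ) < (4:ℝ) ^ k := by positivity
  have h2v : (0:ℝ) < (2:ℝ) ^ v := by positivity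
  field_simp

lemma rpow_mul_modStruveL (μ ν t : ℝ) (ht : 0 < t) :
    t ^ (-ν) * modStruveL μ t = ∑' k : ℕ, t ^ (μ - ν + 2 * (k : ℝ) + 1) /
      (2 ^ (μ + 2 * (k : ℝ) + 1) * (Real.Gamma ((k : ℝ) + 3/2) * Real.Gamma ((k : ℝ) + μ + 3/2))) := by
  rw [modStruveL, ← tsum_mul_left]
  refine tsum_congr fun k => ?_
  have h1 : t ^ (μ - ν + 2 * (k : ℝ) + 1) = t ^ (-ν) * t ^ (μ + 2 * (k : ℝ) + 1) := by
    rw [← Real.rpow_add ht]; ring_nf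
  rw [h1, div_rpow ht.le (by norm_num : (0:ℝ) ≤ 2)]
  ring

lemma integral_eq (ν n x : ℝ) (hn : -1 < n) (hν : -((n + 1) / 2) < ν) (hx : 0 < x) :
    ∫ t in (0:ℝ)..x, t ^ (-ν) * modStruveL (ν + n) t
      = ∑' k : ℕ, x ^ (n + 2 * (k : ℝ) + 2) / ((n + 2 * (k : ℝ) + 2) *
          (2 ^ (ν + n + 2 * (k : ℝ) + 1) *
            (Real.Gamma ((k : ℝ) + 3/2) * Real.Gamma ((k : ℝ) + ν + n + 3/2)))) := by
  have hgd : 0 < ν + n + 3/2 := by linarith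
  set F : ℕ → ℝ → ℝ := fun k t => t ^ (n + 2 * (k : ℝ) + 1) /
      (2 ^ (ν + n + 2 * (k : ℝ) + 1) *
        (Real.Gamma ((k : ℝ) + 3/2) * Real.Gamma ((k : ℝ) + ν + n + 3/2))) with hF
  have hexp : ∀ k : ℕ, (0:ℝ) < n + 2 * (k : ℝ) + 1 := fun k => by
    have : (0:ℝ) ≤ (k : ℝ) := Nat.cast_nonneg k
    linarith
  have hden : ∀ k : ℕ, (0:ℝ) < 2 ^ (ν + n + 2 * (k : ℝ) + 1) *
      (Real.Gamma ((k : ℝ) + 3/2) * Real.Gamma ((k : ℝ) + ν + n + 3/2)) := fun k => by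
    have h1 : (0:ℝ) < Real.Gamma ((k : ℝ) + 3/2) := Real.Gamma_pos_of_pos (by positivity)
    have h2 : (0:ℝ) < Real.Gamma ((k : ℝ) + ν + n + 3/2) := Real.Gamma_pos_of_pos (by
      have : (0:ℝ) ≤ (k : ℝ) := Nat.cast_nonneg k
      linarith)
    positivity
  have hFsum : ∀ t : ℝ, 0 < t → Summable fun k => F k t := fun t ht => by
    refine (summable_term (3/2) (ν + n + 3/2) (n + 1) (ν + n + 1) (by norm_num) hgd ht).congr
      fun k => ?_
    simp only [hF]
    ring_nf
  have hs : HasSum (fun k => ∫ t in (0:ℝ)..x, F k t)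
      (∫ t in (0:ℝ)..x, t ^ (-ν) * modStruveL (ν + n) t) := by
    apply intervalIntegral.hasSum_integral_of_dominated_convergence
      (bound := fun k _ => F k x)
    · intro k
      exact ((Measurable.div_const (by fun_prop) _).aestronglyMeasurable)
    · intro k
      refine MeasureTheory.ae_of_all _ fun t ht => ?_
      rw [Set.uIoc_of_le hx.le] at ht
      rw [Real.norm_eq_abs, hF]
      simp only
      rw [abs_of_nonneg (div_nonneg (Real.rpow_nonneg ht.1.le _) (hden k).le)]
      gcongr <;>
        first
          | exact ht.1.le
          | exact (hexp k).le
          | exact ht.2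
          | exact (hden k).le
          | positivity
    · exact MeasureTheory.ae_of_all _ fun t _ => hFsum x hx
    · exact intervalIntegrable_const
    · refine MeasureTheory.ae_of_all _ fun t ht => ?_
      rw [Set.uIoc_of_le hx.le] at ht
      have h1 : ∑' k, F k t = t ^ (-ν) * modStruveL (ν + n) t := by
        rw [rpow_mul_modStruveL (ν + n) ν t ht.1]
        exact tsum_congr fun k => by simp only [hF]; ring_nf
      exact h1 ▸ (hFsum t ht.1).hasSum
  rw [← hs.tsum_eq]
  refine tsum_congr fun k => ?_
  rw [hF]
  simp only
  rw [intervalIntegral.integral_div, integral_rpow (Or.inl (by linarith [hexp k]))]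
  rw [Real.zero_rpow (by linarith [hexp k] : n + 2 * (k:ℝ) + 1 + 1 ≠ 0), sub_zero,
    show n + 2 * (k : ℝ) + 1 + 1 = n + 2 * (k : ℝ) + 2 by ring, div_div]



lemma base_identity (ν n x : ℝ) (hn : -1 < n) (hgd : 0 < ν + n + 3/2) (hx : 0 < x) :
    2 * (ν + n + 1) / (n + 1) *
        (x ^ (n + 2) / (2 ^ (ν + n + 2) * (Real.Gamma (3/2 : ℝ) * Real.Gamma (ν + n + 5/2))))
      = x ^ (n + 2) / ((n + 2) * (2 ^ (ν + n + 1) *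
          (Real.Gamma (3/2 : ℝ) * Real.Gamma (ν + n + 3/2)))) + cConst ν n * x ^ (n + 2) := by
  have hg32 : Real.Gamma (3/2 : ℝ) = Real.sqrt Real.pi / 2 := by
    rw [show (3/2 : ℝ) = 1/2 + 1 by norm_num, Real.Gamma_add_one (by norm_num),
      Real.Gamma_one_half_eq]
    ring
  have hg52 : Real.Gamma (ν + n + 5/2) = (ν + n + 3/2) * Real.Gamma (ν + n + 3/2) := by
    rw [show ν + n + 5/2 = (ν + n + 3/2) + 1 by ring, Real.Gamma_add_one hgd.ne']
  have h2 : (2:ℝ) ^ (ν + n + 2) = 2 * 2 ^ (ν + n + 1) := by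
    rw [show ν + n + 2 = (ν + n + 1) + 1 by ring, Real.rpow_add (by norm_num : (0:ℝ) < 2),
      Real.rpow_one]
    ring
  rw [cConst, hg52, hg32, h2]
  have hG : 0 < Real.Gamma (ν + n + 3/2) := Real.Gamma_pos_of_pos hgd
  set G := Real.Gamma (ν + n + 3/2) with hGdef
  set P := (2:ℝ) ^ (ν + n + 1) with hPdef
  set S := Real.sqrt Real.pi with hSdef
  set X := x ^ (n + 2) with hXdef
  have h2p : (0:ℝ) < P := Real.rpow_pos_of_pos (by norm_num) _
  have hπ : (0:ℝ) < S := Real.sqrt_pos.2 Real.pi_pos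
  have hn1 : (0:ℝ) < n + 1 := by linarith
  have hn2 : (0:ℝ) < n + 2 := by linarith
  have hB1 : (0:ℝ) < (n + 1) * (2 * P * (S / 2 * ((ν + n + 3/2) * G))) := by
    have : (0:ℝ) < S / 2 * ((ν + n + 3/2) * G) := by
      apply mul_pos (by linarith) (mul_pos hgd hG)
    exact mul_pos hn1 (mul_pos (by linarith) this)
  have hB2 : (0:ℝ) < (n + 2) * (P * (S / 2 * G)) := by
    apply mul_pos hn2 (mul_pos h2p (mul_pos (by linarith) hG))
  have hB3 : (0:ℝ) < S * P * (n + 1) * (n + 2) * ((ν + n + 3/2) * G) := by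
    apply mul_pos (mul_pos (mul_pos (mul_pos hπ h2p) hn1) hn2) (mul_pos hgd hG)
  have hc : (2*ν + n + 1) / (S * P * (n + 1) * (n + 2) * ((ν + n + 3/2) * G)) * X
      = ((2*ν + n + 1) * X) / (S * P * (n + 1) * (n + 2) * ((ν + n + 3/2) * G)) :=
    div_mul_eq_mul_div _ _ _
  rw [div_mul_div_comm, hc, div_add_div _ _ hB2.ne' hB3.ne',
    div_eq_div_iff hB1.ne' (mul_pos hB2 hB3).ne']
  ring

lemma term_lt (ν n x J : ℝ) (hn : -1 < n) (hν : -((n + 1) / 2) < ν) (hx : 0 < x) (hJ : 0 ≤ J) :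
    x ^ (n + 2*J + 4) / ((n + 2*J + 4) * (2 ^ (ν + n + 2*J + 3) *
        (Real.Gamma (J + 5/2) * Real.Gamma (J + ν + n + 5/2))))
      + (2*ν + n + 1) / (n + 1) * (x ^ (n + 2*J + 4) / (2 ^ (ν + n + 2*J + 4) *
        (Real.Gamma (J + 3/2) * Real.Gamma (J + ν + n + 9/2))))
    < 2 * (ν + n + 1) / (n + 1) * (x ^ (n + 2*J + 4) / (2 ^ (ν + n + 2*J + 4) *
        (Real.Gamma (J + 5/2) * Real.Gamma (J + ν + n + 7/2)))) := by
  have hq : (0:ℝ) < 2*ν + n + 1 := by linarith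
  have hq3 : (0:ℝ) < 2*ν + n + 3 := by linarith
  have hn1 : (0:ℝ) < n + 1 := by linarith
  have hgd : (0:ℝ) < ν + n + 3/2 := by linarith
  have hJ32 : (0:ℝ) < J + 3/2 := by linarith
  have hs5 : (0:ℝ) < J + ν + n + 5/2 := by linarith
  have hs7 : (0:ℝ) < J + ν + n + 7/2 := by linarith
  have hn4 : (0:ℝ) < n + 2*J + 4 := by linarith
  have e1 : Real.Gamma (J + 5/2) = (J + 3/2) * Real.Gamma (J + 3/2) := by
    rw [show J + 5/2 = (J + 3/2) + 1 by ring, Real.Gamma_add_one hJ32.ne']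
  have e2 : Real.Gamma (J + ν + n + 7/2) = (J + ν + n + 5/2) * Real.Gamma (J + ν + n + 5/2) := by
    rw [show J + ν + n + 7/2 = (J + ν + n + 5/2) + 1 by ring, Real.Gamma_add_one hs5.ne']
  have e3 : Real.Gamma (J + ν + n + 9/2)
      = (J + ν + n + 7/2) * ((J + ν + n + 5/2) * Real.Gamma (J + ν + n + 5/2)) := by
    rw [show J + ν + n + 9/2 = (J + ν + n + 7/2) + 1 by ring, Real.Gamma_add_one hs7.ne', e2]
  have e4 : (2:ℝ) ^ (ν + n + 2*J + 4) = 2 * 2 ^ (ν + n + 2*J + 3) := by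
    rw [show ν + n + 2*J + 4 = (ν + n + 2*J + 3) + 1 by ring,
      Real.rpow_add (by norm_num : (0:ℝ) < 2), Real.rpow_one]
    ring
  have hg1 : 0 < Real.Gamma (J + 3/2) := Real.Gamma_pos_of_pos hJ32
  have hg2 : 0 < Real.Gamma (J + ν + n + 5/2) := Real.Gamma_pos_of_pos hs5
  rw [e1, e2, e3, e4]
  set g1 := Real.Gamma (J + 3/2) with hg1def
  set g2 := Real.Gamma (J + ν + n + 5/2) with hg2def
  set P := (2:ℝ) ^ (ν + n + 2*J + 3) with hPdef
  set X := x ^ (n + 2*J + 4) with hXdef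
  have hP : (0:ℝ) < P := Real.rpow_pos_of_pos (by norm_num) _
  have hX : (0:ℝ) < X := Real.rpow_pos_of_pos hx _
  have hD1 : (0:ℝ) < (n + 2*J + 4) * (P * ((J + 3/2) * g1 * g2)) :=
    mul_pos hn4 (mul_pos hP (mul_pos (mul_pos hJ32 hg1) hg2))
  have hD2 : (0:ℝ) < (n + 1) * (2 * P * (g1 * ((J + ν + n + 7/2) * ((J + ν + n + 5/2) * g2)))) :=
    mul_pos hn1 (mul_pos (by linarith) (mul_pos hg1 (mul_pos hs7 (mul_pos hs5 hg2))))
  have hD3 : (0:ℝ) < (n + 1) * (2 * P * ((J + 3/2) * g1 * ((J + ν + n + 5/2) * g2))) :=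
    mul_pos hn1 (mul_pos (by linarith) (mul_pos (mul_pos hJ32 hg1) (mul_pos hs5 hg2)))
  rw [div_mul_div_comm, div_mul_div_comm, div_add_div _ _ hD1.ne' hD2.ne',
    div_lt_div_iff₀ (mul_pos hD1 hD2) hD3]
  have expand : 2 * (ν + n + 1) * X * ((n + 2*J + 4) * (P * ((J + 3/2) * g1 * g2)) *
        ((n + 1) * (2 * P * (g1 * ((J + ν + n + 7/2) * ((J + ν + n + 5/2) * g2))))))
      - (X * ((n + 1) * (2 * P * (g1 * ((J + ν + n + 7/2) * ((J + ν + n + 5/2) * g2)))))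
          + (n + 2*J + 4) * (P * ((J + 3/2) * g1 * g2)) * ((2*ν + n + 1) * X)) *
        ((n + 1) * (2 * P * ((J + 3/2) * g1 * ((J + ν + n + 5/2) * g2))))
      = X * ((2*ν + n + 1) * ((2*ν + n + 3) * ((J + 3/2) * ((J + 3/2) * ((n + 1) *
          ((J + ν + n + 5/2) * (2 * (g1 * (g1 * (g2 * (g2 * (P * P)))))))))))) := by
    ring
  have hpos : (0:ℝ) < X * ((2*ν + n + 1) * ((2*ν + n + 3) * ((J + 3/2) * ((J + 3/2) * ((n + 1) *
      ((J + ν + n + 5/2) * (2 * (g1 * (g1 * (g2 * (g2 * (P * P)))))))))))) :=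
    mul_pos hX (mul_pos hq (mul_pos hq3 (mul_pos hJ32 (mul_pos hJ32 (mul_pos hn1
      (mul_pos hs5 (mul_pos (by linarith) (mul_pos hg1 (mul_pos hg1
        (mul_pos hg2 (mul_pos hg2 (mul_pos hP hP))))))))))))
  linarith

theorem struve_integral_upper_bound (ν n x : ℝ) (hn : n > -1)
    (hν : ν > -((n + 1) / 2)) (hx : x > 0) :
    ∫ t in (0 : ℝ)..x, t ^ (-ν) * modStruveL (ν + n) t <
      (2 * (ν + n + 1) / (n + 1)) * (x ^ (-ν) * modStruveL (ν + n + 1) x) -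
        ((2 * ν + n + 1) / (n + 1)) * (x ^ (-ν) * modStruveL (ν + n + 3) x) +
        bConst ν n * x ^ (n + 4) - cConst ν n * x ^ (n + 2) := by
  have hgd : (0:ℝ) < ν + n + 3/2 := by linarith
  have hn1 : (0:ℝ) < n + 1 := by linarith
  have hq : (0:ℝ) < 2*ν + n + 1 := by linarith
  set c1 : ℝ := 2 * (ν + n + 1) / (n + 1) with hc1
  set c2 : ℝ := (2 * ν + n + 1) / (n + 1) with hc2
  set A : ℕ → ℝ := fun k => x ^ (n + 2 * (k : ℝ) + 2) / ((n + 2 * (k : ℝ) + 2) *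
      (2 ^ (ν + n + 2 * (k : ℝ) + 1) *
        (Real.Gamma ((k : ℝ) + 3/2) * Real.Gamma ((k : ℝ) + ν + n + 3/2)))) with hA
  set T1 : ℕ → ℝ := fun k => x ^ (n + 2 * (k : ℝ) + 2) / (2 ^ (ν + n + 2 * (k : ℝ) + 2) *
      (Real.Gamma ((k : ℝ) + 3/2) * Real.Gamma ((k : ℝ) + ν + n + 5/2))) with hT1
  set T3 : ℕ → ℝ := fun k => x ^ (n + 2 * (k : ℝ) + 4) / (2 ^ (ν + n + 2 * (k : ℝ) + 4) *
      (Real.Gamma ((k : ℝ) + 3/2) * Real.Gamma ((k : ℝ) + ν + n + 9/2))) with hT3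
  have hInt : ∫ t in (0 : ℝ)..x, t ^ (-ν) * modStruveL (ν + n) t = ∑' k, A k :=
    integral_eq ν n x hn hν hx
  have hL1 : x ^ (-ν) * modStruveL (ν + n + 1) x = ∑' k, T1 k := by
    rw [rpow_mul_modStruveL _ ν x hx]
    exact tsum_congr fun k => by simp only [hT1]; ring_nf
  have hL3 : x ^ (-ν) * modStruveL (ν + n + 3) x = ∑' k, T3 k := by
    rw [rpow_mul_modStruveL _ ν x hx]
    exact tsum_congr fun k => by simp only [hT3]; ring_nf
  rw [hInt, hL1, hL3]
  have e5 : c1 * ∑' k, T1 k = ∑' k, c1 * T1 k := tsum_mul_left.symm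
  have e6 : c2 * ∑' k, T3 k = ∑' k, c2 * T3 k := tsum_mul_left.symm
  rw [e5, e6]
  -- summability
  have ST1 : Summable T1 := by
    refine (summable_term (3/2) (ν + n + 5/2) (n + 2) (ν + n + 2) (by norm_num)
      (by linarith) hx).congr fun k => ?_
    simp only [hT1]; ring_nf
  have ST3 : Summable T3 := by
    refine (summable_term (3/2) (ν + n + 9/2) (n + 4) (ν + n + 4) (by norm_num)
      (by linarith) hx).congr fun k => ?_
    simp only [hT3]; ring_nf
  have base' : Summable (fun k : ℕ => x ^ (n + 2 * (k : ℝ) + 2) /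
      (2 ^ (ν + n + 2 * (k : ℝ) + 1) *
        (Real.Gamma ((k : ℝ) + 3/2) * Real.Gamma ((k : ℝ) + ν + n + 3/2)))) := by
    refine (summable_term (3/2) (ν + n + 3/2) (n + 2) (ν + n + 1) (by norm_num)
      hgd hx).congr fun k => ?_
    ring_nf
  have hDpos : ∀ k : ℕ, (0:ℝ) < 2 ^ (ν + n + 2 * (k : ℝ) + 1) *
      (Real.Gamma ((k : ℝ) + 3/2) * Real.Gamma ((k : ℝ) + ν + n + 3/2)) := fun k => by
    have h0k : (0:ℝ) ≤ (k : ℝ) := Nat.cast_nonneg k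
    exact mul_pos (Real.rpow_pos_of_pos (by norm_num) _)
      (mul_pos (Real.Gamma_pos_of_pos (by linarith)) (Real.Gamma_pos_of_pos (by linarith)))
  have SA : Summable A := by
    refine Summable.of_nonneg_of_le (fun k => ?_) (fun k => ?_) base'
    · have h0k : (0:ℝ) ≤ (k : ℝ) := Nat.cast_nonneg k
      exact div_nonneg (Real.rpow_nonneg hx.le _)
        (mul_nonneg (by linarith) (hDpos k).le)
    · have h0k : (0:ℝ) ≤ (k : ℝ) := Nat.cast_nonneg k
      simp only [hA]
      rw [show (n + 2*(k:ℝ) + 2) * (2 ^ (ν + n + 2*(k:ℝ) + 1) *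
            (Real.Gamma ((k:ℝ) + 3/2) * Real.Gamma ((k:ℝ) + ν + n + 3/2)))
          = 2 ^ (ν + n + 2*(k:ℝ) + 1) *
            (Real.Gamma ((k:ℝ) + 3/2) * Real.Gamma ((k:ℝ) + ν + n + 3/2)) *
            (n + 2*(k:ℝ) + 2) by ring, ← div_div]
      exact div_le_self (div_nonneg (Real.rpow_nonneg hx.le _) (hDpos k).le) (by linarith)
  -- termwise strict inequality for shifted indices
  have hterm : ∀ k : ℕ, A (k + 1) + c2 * T3 k < c1 * T1 (k + 1) := by
    intro k
    have h := term_lt ν n x (k : ℝ) hn hν hx (Nat.cast_nonneg k)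
    have eA : A (k + 1) = x ^ (n + 2*(k:ℝ) + 4) / ((n + 2*(k:ℝ) + 4) *
        (2 ^ (ν + n + 2*(k:ℝ) + 3) *
          (Real.Gamma ((k:ℝ) + 5/2) * Real.Gamma ((k:ℝ) + ν + n + 5/2)))) := by
      simp only [hA]; push_cast; ring_nf
    have eT3 : c2 * T3 k = (2*ν + n + 1) / (n + 1) * (x ^ (n + 2*(k:ℝ) + 4) /
        (2 ^ (ν + n + 2*(k:ℝ) + 4) *
          (Real.Gamma ((k:ℝ) + 3/2) * Real.Gamma ((k:ℝ) + ν + n + 9/2)))) := by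
      simp only [hT3, hc2]
    have eT1 : c1 * T1 (k + 1) = 2 * (ν + n + 1) / (n + 1) * (x ^ (n + 2*(k:ℝ) + 4) /
        (2 ^ (ν + n + 2*(k:ℝ) + 4) *
          (Real.Gamma ((k:ℝ) + 5/2) * Real.Gamma ((k:ℝ) + ν + n + 7/2)))) := by
      simp only [hT1, hc1]; push_cast; ring_nf
    rw [eA, eT3, eT1]
    exact h
  have SA1 : Summable (fun k => A (k + 1)) := (summable_nat_add_iff 1).2 SA
  have ST11 : Summable (fun k => c1 * T1 (k + 1)) :=
    ((summable_nat_add_iff 1).2 ST1).mul_left c1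
  have Sf : Summable (fun k => A (k + 1) + c2 * T3 k) := SA1.add (ST3.mul_left c2)
  have hsum : ∑' k, (A (k + 1) + c2 * T3 k) < ∑' k, c1 * T1 (k + 1) :=
    Summable.tsum_lt_tsum (fun k => (hterm k).le) (hterm 0) Sf ST11
  rw [Summable.tsum_add SA1 (ST3.mul_left c2)] at hsum
  have split1 : ∑' k, c1 * T1 k = c1 * T1 0 + ∑' k, c1 * T1 (k + 1) :=
    Summable.tsum_eq_zero_add (ST1.mul_left c1)
  have split2 : ∑' k, A k = A 0 + ∑' k, A (k + 1) := Summable.tsum_eq_zero_add SA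
  have h0 : c1 * T1 0 = A 0 + cConst ν n * x ^ (n + 2) := by
    have h := base_identity ν n x hn hgd hx
    have eT10 : c1 * T1 0 = 2 * (ν + n + 1) / (n + 1) * (x ^ (n + 2) /
        (2 ^ (ν + n + 2) * (Real.Gamma (3/2 : ℝ) * Real.Gamma (ν + n + 5/2)))) := by
      simp only [hT1, hc1]; push_cast; ring_nf
    have eA0 : A 0 = x ^ (n + 2) / ((n + 2) *
        (2 ^ (ν + n + 1) * (Real.Gamma (3/2 : ℝ) * Real.Gamma (ν + n + 3/2)))) := by
      simp only [hA]; push_cast; ring_nf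
    rw [eT10, eA0]
    exact h
  have hbpos : (0:ℝ) < bConst ν n * x ^ (n + 4) := by
    have hπ : (0:ℝ) < Real.sqrt Real.pi := Real.sqrt_pos.2 Real.pi_pos
    have hden : (0:ℝ) < Real.sqrt Real.pi * (2:ℝ) ^ (ν + n + 4) * (n + 1) * (n + 4) *
        (ν + n + 3) * Real.Gamma (ν + n + 9/2) :=
      mul_pos (mul_pos (mul_pos (mul_pos (mul_pos hπ
        (Real.rpow_pos_of_pos (by norm_num) _)) hn1) (by linarith)) (by linarith))
        (Real.Gamma_pos_of_pos (by linarith))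
    exact mul_pos (div_pos (mul_pos hq (by linarith)) hden) (Real.rpow_pos_of_pos hx _)
  have hc2T3 : ∀ k : ℕ, True := fun _ => trivial
  linarith [hsum, split1, split2, h0, hbpos]
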